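/- Let n ≥ 1, let 0 < s < 1 and p > 1 be real numbers, and let ε > 0. Let u, v : ℝⁿ → ℝ be measurable functions with v ≥ 0 everywhere and v(y) = 0 for every y with u(y) ≤ ε. Assume that the functions (x, y) ↦ Φ_p((u(x) − ε)⁺ − (u(y) − ε)⁺)·(v(x) − v(y)) / |x − y|^{n+sp} and (x, y) ↦ Φ_p(u(x) − u(y))·(v(x) − v(y)) / |x − y|^{n+sp} are Lebesgue integrable on ℝⁿ × ℝⁿ. Then ∬_{ℝⁿ×ℝⁿ} Φ_p((u(x) − ε)⁺ − (u(y) − ε)⁺)·(v(x) − v(y)) / |x − y|^{n+sp} dx dy ≤ ∬_{ℝⁿ×ℝⁿ} Φ_p(u(x) − u(y))·(v(x) − v(y)) / |x − y|^{n+sp} dx dy. -/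
import Mathlib


open MeasureTheory

/-- `Φ_p(t) = |t|^{p-2} t`. -/
noncomputable def Phi (p t : ℝ) : ℝ := |t| ^ (p - 2) * t

lemma Phi_of_nonneg (p t : ℝ) (hp : 1 < p) (ht : 0 ≤ t) : Phi p t = t ^ (p - 1) := by
  rcases eq_or_lt_of_le ht with h | h
  · simp [Phi, ← h, Real.zero_rpow (by linarith : p - 1 ≠ 0)]
  · rw [Phi, abs_of_pos h, show p - 1 = (p - 2) + 1 by ring, Real.rpow_add_one h.ne']

lemma Phi_neg (p t : ℝ) : Phi p (-t) = -Phi p t := by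
  simp [Phi, abs_neg, mul_neg]

lemma Phi_mono (p : ℝ) (hp : 1 < p) : Monotone (Phi p) := by
  have key : ∀ x y : ℝ, 0 ≤ x → x ≤ y → Phi p x ≤ Phi p y := by
    intro x y hx hxy
    rw [Phi_of_nonneg p x hp hx, Phi_of_nonneg p y hp (hx.trans hxy)]
    exact Real.rpow_le_rpow hx hxy (by linarith)
  intro x y hxy
  rcases le_or_gt 0 x with hx | hx
  · exact key x y hx hxy
  rcases le_or_gt 0 y with hy | hy
  · have h1 : Phi p x ≤ 0 := mul_nonpos_of_nonneg_of_nonpos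
      (Real.rpow_nonneg (abs_nonneg x) _) hx.le
    have h2 : 0 ≤ Phi p y := mul_nonneg (Real.rpow_nonneg (abs_nonneg y) _) hy
    linarith
  · have := key (-y) (-x) (by linarith) (by linarith)
    rw [Phi_neg, Phi_neg] at this
    linarith

lemma Phi_key (p ε a b vx vy : ℝ) (hp : 1 < p)
    (hvx : 0 ≤ vx) (hvy : 0 ≤ vy) (hax : a ≤ ε → vx = 0) (hby : b ≤ ε → vy = 0) :
    Phi p (max (a - ε) 0 - max (b - ε) 0) * (vx - vy) ≤ Phi p (a - b) * (vx - vy) := by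
  by_cases ha : a ≤ ε <;> by_cases hb : b ≤ ε
  · simp [hax ha, hby hb]
  · rw [hax ha, max_eq_right (by linarith : a - ε ≤ 0),
      max_eq_left (by linarith : (0:ℝ) ≤ b - ε)]
    have h1 : Phi p (a - b) ≤ Phi p (0 - (b - ε)) := Phi_mono p hp (by linarith)
    have h2 : (0:ℝ) - vy ≤ 0 := by linarith
    exact mul_le_mul_of_nonpos_right h1 h2
  · rw [hby hb, max_eq_right (by linarith : b - ε ≤ 0),
      max_eq_left (by linarith : (0:ℝ) ≤ a - ε)]
    have h1 : Phi p (a - ε - 0) ≤ Phi p (a - b) := Phi_mono p hp (by linarith)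
    have h2 : (0:ℝ) ≤ vx - 0 := by linarith
    exact mul_le_mul_of_nonneg_right h1 h2
  · rw [max_eq_left (by linarith : (0:ℝ) ≤ a - ε),
      max_eq_left (by linarith : (0:ℝ) ≤ b - ε)]
    have : a - ε - (b - ε) = a - b := by ring
    rw [this]

/-- The weak form of the fractional p-Laplacian of the truncation `(u − ε)⁺`, tested against
nonnegative functions `v` supported in `{u > ε}`, is dominated by the weak form of the
fractional p-Laplacian of `u`. -/
theorem fractional_pLaplacian_truncation (n : ℕ) (hn : 1 ≤ n) (s p ε : ℝ)
    (hs0 : 0 < s) (hs1 : s < 1) (hp : 1 < p) (hε : 0 < ε)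
    (u v : EuclideanSpace ℝ (Fin n) → ℝ) (hu : Measurable u) (hv : Measurable v)
    (hv0 : ∀ y, 0 ≤ v y) (hvsupp : ∀ y, u y ≤ ε → v y = 0)
    (hint1 : Integrable (fun q : EuclideanSpace ℝ (Fin n) × EuclideanSpace ℝ (Fin n) =>
      Phi p (max (u q.1 - ε) 0 - max (u q.2 - ε) 0) * (v q.1 - v q.2) /
        ‖q.1 - q.2‖ ^ ((n : ℝ) + s * p)))
    (hint2 : Integrable (fun q : EuclideanSpace ℝ (Fin n) × EuclideanSpace ℝ (Fin n) =>
      Phi p (u q.1 - u q.2) * (v q.1 - v q.2) / ‖q.1 - q.2‖ ^ ((n : ℝ) + s * p))) :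
    (∫ q : EuclideanSpace ℝ (Fin n) × EuclideanSpace ℝ (Fin n),
      Phi p (max (u q.1 - ε) 0 - max (u q.2 - ε) 0) * (v q.1 - v q.2) /
        ‖q.1 - q.2‖ ^ ((n : ℝ) + s * p)) ≤
    ∫ q : EuclideanSpace ℝ (Fin n) × EuclideanSpace ℝ (Fin n),
      Phi p (u q.1 - u q.2) * (v q.1 - v q.2) / ‖q.1 - q.2‖ ^ ((n : ℝ) + s * p) := by
  refine integral_mono hint1 hint2 (fun q => ?_)
  have hnum := Phi_key p ε (u q.1) (u q.2) (v q.1) (v q.2) hp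
    (hv0 q.1) (hv0 q.2) (hvsupp q.1) (hvsupp q.2)
  have hden : (0:ℝ) ≤ (‖q.1 - q.2‖ ^ ((n : ℝ) + s * p))⁻¹ :=
    inv_nonneg.mpr (Real.rpow_nonneg (norm_nonneg _) _)
  simpa [div_eq_mul_inv] using mul_le_mul_of_nonneg_right hnum hden
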